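/- For every n ≥ 2 and every non-bijective transformation α of {1,…,n}, the minimal length ℓ(K_n, α) of a product of arcs of the complete digraph K_n equal to α satisfies ℓ(K_n, α) = n + cycl(α) − fix(α). -/

import Mathlib

noncomputable section

variable {V : Type*}

/-- The arc `(a→b)`: the map sending `a` to `b` and fixing every other point. -/
def arcMap [DecidableEq V] (a b : V) : V → V := fun x => if x = a then b else x

/-- Evaluate a word of arcs, applying the arcs from left to right. -/
def wordEval [DecidableEq V] (w : List (V × V)) : V → V :=
  fun x => w.foldl (fun y e => arcMap e.1 e.2 y) x

/-- `α ∈ ⟨D⟩`: `α` is a (nonempty) product of arcs of the digraph `D`. -/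
def InGen [DecidableEq V] (D : V → V → Prop) (α : V → V) : Prop :=
  ∃ w : List (V × V), w ≠ [] ∧ (∀ e ∈ w, D e.1 e.2) ∧ wordEval w = α

/-- `ℓ(D, α)`: the minimal length of a word in the arcs of `D` expressing `α`. -/
def arcLen [DecidableEq V] (D : V → V → Prop) (α : V → V) : ℕ :=
  sInf {k | ∃ w : List (V × V), w.length = k ∧ (∀ e ∈ w, D e.1 e.2) ∧ wordEval w = α}

/-- `fix(α)`: the number of fixed points of `α`. -/
def fixCnt (α : V → V) : ℕ := Set.ncard {x | α x = x}

/-- `rk(α)`: the rank of `α`, i.e. the cardinality of its image. -/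
def rnk (α : V → V) : ℕ := Set.ncard (Set.range α)

/-- A set `C` is a cyclic orbit of `α` if it is a weakly connected component of the
functional digraph of `α` (edges `(x, α x)`) which is a directed cycle on at least two
vertices: equivalently, `C` is the forward orbit of a periodic point, has at least two
elements, and is closed under taking preimages. -/
def IsCyclicOrbit (α : V → V) (C : Set V) : Prop :=
  2 ≤ C.ncard ∧ (∃ x ∈ C, (∃ k, 0 < k ∧ α^[k] x = x) ∧ C = {y | ∃ k, α^[k] x = y}) ∧
    ∀ y : V, α y ∈ C → y ∈ C

/-- `cycl(α)`: the number of cyclic orbits of `α`. -/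
def cyclCnt (α : V → V) : ℕ := Set.ncard {C : Set V | IsCyclicOrbit α C}

/-- `D` is connected: any two vertices are joined by a directed path in some direction. -/
def ConnectedDigraph (D : V → V → Prop) : Prop :=
  ∀ u v : V, Relation.ReflTransGen D u v ∨ Relation.ReflTransGen D v u

/-- `D` is closed (equal to its closure): whenever `(b,a)` is an edge lying on a directed
cycle of `D` (i.e. there is a directed path from `a` back to `b`), `(a,b)` is also an edge. -/
def ClosedDigraph (D : V → V → Prop) : Prop :=
  ∀ a b : V, D b a → Relation.ReflTransGen D a b → D a b

/-- Property (★): if `v0, v1, v2` is a directed path with `d_D(v0,v2) = 2`, then every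
out-neighbour of `v1` and of `v2` lies in `{v0, v1, v2}`. -/
def StarCond (D : V → V → Prop) : Prop :=
  ∀ v0 v1 v2 : V, D v0 v1 → D v1 v2 → v0 ≠ v2 → ¬ D v0 v2 →
    ∀ u : V, (D v1 u ∨ D v2 u) → (u = v0 ∨ u = v1 ∨ u = v2)

/-- `C` is a strong component of `D`. -/
def IsSC (D : V → V → Prop) (C : Set V) : Prop :=
  ∃ v : V, C = {u | Relation.ReflTransGen D u v ∧ Relation.ReflTransGen D v u}

/-- `C1` connects to `C2`: some edge goes from `C1` to `C2`. -/
def ConnectsTo (D : V → V → Prop) (C1 C2 : Set V) : Prop :=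
  ∃ v1 ∈ C1, ∃ v2 ∈ C2, D v1 v2

/-- `C1` fully connects to `C2`: all pairs are edges. -/
def FullyConnects (D : V → V → Prop) (C1 C2 : Set V) : Prop :=
  ∀ v1 ∈ C1, ∀ v2 ∈ C2, D v1 v2

/-- A terminal strong component: it connects to no other strong component. -/
def IsTerminalSC (D : V → V → Prop) (C : Set V) : Prop :=
  IsSC D C ∧ ∀ C' : Set V, IsSC D C' → C' ≠ C → ¬ ConnectsTo D C C'

/-- Property (★★): nonterminal strong components have at most 2 vertices and terminal
strong components have at most 3 vertices. -/
def StarStarCond (D : V → V → Prop) : Prop :=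
  ∀ C : Set V, IsSC D C →
    (IsTerminalSC D C → C.ncard ≤ 3) ∧ (¬ IsTerminalSC D C → C.ncard ≤ 2)

/-- The induced subdigraph on `C` is an undirected path `a - b - c` on three vertices. -/
def IsP3 (D : V → V → Prop) (C : Set V) : Prop :=
  ∃ a b c : V, a ≠ b ∧ b ≠ c ∧ a ≠ c ∧ C = {a, b, c} ∧
    ∀ u ∈ C, ∀ w ∈ C,
      (D u w ↔ (u = a ∧ w = b) ∨ (u = b ∧ w = a) ∨ (u = b ∧ w = c) ∨ (u = c ∧ w = b))

/-- `D` has a subdigraph isomorphic to `H`: an injection mapping edges of `H` to edges of `D`. -/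
def HasSubdigraph (D : V → V → Prop) {m : ℕ} (H : Fin m → Fin m → Prop) : Prop :=
  ∃ f : Fin m → V, Function.Injective f ∧ ∀ i j : Fin m, H i j → D (f i) (f j)

/-- `Θ_k`: the directed cycle on `k` vertices. -/
def Theta (k : ℕ) : Fin k → Fin k → Prop := fun i j => (j : ℕ) = ((i : ℕ) + 1) % k

/-- `Γ1` (vertices relabelled from `{1,…,5}` to `{0,…,4}`). -/
def Gamma1 : Fin 5 → Fin 5 → Prop := fun i j =>
  ((i : ℕ), (j : ℕ)) ∈ [(0,3),(3,0),(1,3),(3,1),(2,3),(3,2),(3,4)]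

/-- `Γ2` (vertices relabelled from `{1,…,5}` to `{0,…,4}`). -/
def Gamma2 : Fin 5 → Fin 5 → Prop := fun i j =>
  ((i : ℕ), (j : ℕ)) ∈ [(0,2),(2,0),(1,2),(2,1),(2,3),(3,2),(3,4)]

/-- `Γ3` (vertices relabelled from `{1,…,4}` to `{0,…,3}`). -/
def Gamma3 : Fin 4 → Fin 4 → Prop := fun i j =>
  ((i : ℕ), (j : ℕ)) ∈ [(0,1),(1,2),(2,0),(2,3)]

/-- `Γ4` (vertices relabelled from `{1,…,5}` to `{0,…,4}`). -/
def Gamma4 : Fin 5 → Fin 5 → Prop := fun i j =>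
  ((i : ℕ), (j : ℕ)) ∈ [(0,1),(1,2),(2,3),(3,0),(3,4)]

/-- No subdigraph isomorphic to `Γ1`, `Γ2`, `Γ3`, `Γ4` or `Θ_k` for `k ≥ 5`. -/
def ForbiddenFree (D : V → V → Prop) : Prop :=
  ¬ HasSubdigraph D Gamma1 ∧ ¬ HasSubdigraph D Gamma2 ∧ ¬ HasSubdigraph D Gamma3 ∧
    ¬ HasSubdigraph D Gamma4 ∧ ∀ k : ℕ, 5 ≤ k → ¬ HasSubdigraph D (Theta k)

/-- `D` is acyclic: it has no directed cycle. -/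
def AcyclicRel (D : V → V → Prop) : Prop := ∀ v : V, ¬ Relation.TransGen D v v

/-- `ψ_A(u,w)`: the maximal number of edges of a directed path from `u` to `w` in `A`
(in particular `ψ_A(u,u) = 0`). -/
def psiLongest (A : V → V → Prop) (u w : V) : ℕ :=
  sSup {l | ∃ p : List V, p.Chain' A ∧ p.Nodup ∧
    p.head? = some u ∧ p.getLast? = some w ∧ p.length = l + 1}

/-- `d_D(u,w)`: the minimal number of edges of a directed path from `u` to `w` in `D`. -/
def ddist (D : V → V → Prop) (u w : V) : ℕ :=
  sInf {l | ∃ p : List V, p.Chain' D ∧ p.head? = some u ∧ p.getLast? = some w ∧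
    p.length = l + 1}

/-- A tournament: no loops, and exactly one of `(u,v)`, `(v,u)` is an edge for `u ≠ v`. -/
def IsTournament (D : V → V → Prop) : Prop :=
  (∀ v : V, ¬ D v v) ∧ ∀ u v : V, u ≠ v → (D u v ∨ D v u) ∧ ¬ (D u v ∧ D v u)

/-- A strong (strongly connected) digraph. -/
def IsStrongDigraph (D : V → V → Prop) : Prop :=
  ∀ u v : V, Relation.ReflTransGen D u v

section Aux
open Function Set

lemma wordEval_nil [DecidableEq V] : wordEval ([] : List (V × V)) = id := rfl

lemma wordEval_append [DecidableEq V] (u v : List (V × V)) :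
    wordEval (u ++ v) = wordEval v ∘ wordEval u := by
  funext x
  simp [wordEval, List.foldl_append]

variable {f g : V → V} {C C' : Set V}

lemma cyc_forward (h : IsCyclicOrbit f C) {x : V} (hx : x ∈ C) : f x ∈ C := by
  obtain ⟨-, ⟨x₀, hx₀, -, horb⟩, -⟩ := h
  rw [horb] at hx ⊢
  obtain ⟨k, rfl⟩ := hx
  exact ⟨k + 1, Function.iterate_succ_apply' f k x₀⟩

lemma cyc_iter_mem (h : IsCyclicOrbit f C) {x : V} (hx : x ∈ C) (k : ℕ) : f^[k] x ∈ C := by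
  induction k with
  | zero => exact hx
  | succ k ih => rw [Function.iterate_succ_apply']; exact cyc_forward h ih

lemma cyc_mem_orbit (h : IsCyclicOrbit f C) {z : V} (hz : z ∈ C) :
    (∃ p, 0 < p ∧ f^[p] z = z) ∧ C = {y | ∃ k, f^[k] z = y} := by
  obtain ⟨-, ⟨x₀, hx₀, ⟨k, hk, hper⟩, horb⟩, -⟩ := h
  have hz' := hz
  rw [horb] at hz'
  obtain ⟨m, rfl⟩ := hz'
  have hmul : ∀ t : ℕ, f^[k * t] x₀ = x₀ := by
    intro t
    have : IsPeriodicPt f (t * k) x₀ := (show IsPeriodicPt f k x₀ from hper).const_mul t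
    simpa [mul_comm] using this.eq
  constructor
  · refine ⟨k, hk, ?_⟩
    rw [← Function.iterate_add_apply, add_comm, Function.iterate_add_apply, hper]
  · rw [horb]
    ext y
    constructor
    · rintro ⟨j, rfl⟩
      have hle : m ≤ k * m := Nat.le_mul_of_pos_left m hk
      refine ⟨j + (k * m - m), ?_⟩
      rw [← Function.iterate_add_apply]
      have h2 : j + (k * m - m) + m = j + k * m := by omega
      rw [h2, Function.iterate_add_apply f j (k*m), hmul]
    · rintro ⟨j, rfl⟩
      exact ⟨j + m, Function.iterate_add_apply f j m x₀⟩

lemma cyc_unique (h : IsCyclicOrbit f C) (h' : IsCyclicOrbit f C') {z : V}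
    (hz : z ∈ C) (hz' : z ∈ C') : C = C' := by
  rw [(cyc_mem_orbit h hz).2, (cyc_mem_orbit h' hz').2]

lemma cyc_subset_range (h : IsCyclicOrbit f C) : C ⊆ Set.range f := by
  intro y hy
  obtain ⟨⟨p, hp, hper⟩, -⟩ := cyc_mem_orbit h hy
  refine ⟨f^[p-1] y, ?_⟩
  rw [← Function.iterate_succ_apply' f (p-1) y]
  have h2 : p - 1 + 1 = p := by omega
  rw [show (p-1).succ = p - 1 + 1 from rfl, h2, hper]

lemma cyc_no_fix (h : IsCyclicOrbit f C) {x : V} (hx : x ∈ C) : f x ≠ x := by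
  intro hfix
  obtain ⟨-, horb⟩ := cyc_mem_orbit h hx
  have hsub : C ⊆ {x} := by
    rw [horb]
    rintro y ⟨k, rfl⟩
    simp [Function.iterate_fixed hfix]
  have := h.1
  have : C.ncard ≤ 1 := le_trans (Set.ncard_le_ncard hsub (Set.finite_singleton x)) (by simp)
  omega

lemma cyc_transfer (h : IsCyclicOrbit f C) (hfg : ∀ x ∈ C, g x = f x)
    (hpre : ∀ y, g y ∈ C → y ∈ C) : IsCyclicOrbit g C := by
  have hiter : ∀ (k : ℕ) (x : V), x ∈ C → g^[k] x = f^[k] x := by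
    intro k x hx
    induction k with
    | zero => rfl
    | succ k ih =>
      rw [Function.iterate_succ_apply', Function.iterate_succ_apply', ih,
        hfg _ (cyc_iter_mem h hx k)]
  obtain ⟨hcard, ⟨x₀, hx₀, ⟨k, hk, hper⟩, horb⟩, -⟩ := h
  refine ⟨hcard, ⟨x₀, hx₀, ⟨k, hk, by rw [hiter k x₀ hx₀]; exact hper⟩, ?_⟩, hpre⟩
  rw [horb]
  ext y
  simp only [Set.mem_setOf_eq]
  constructor
  · rintro ⟨j, rfl⟩; exact ⟨j, hiter j x₀ hx₀⟩
  · rintro ⟨j, rfl⟩; exact ⟨j, (hiter j x₀ hx₀).symm⟩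

end Aux

set_option linter.unusedSectionVars false
section Step
open Function Set
variable [DecidableEq V] [Finite V]

lemma arcMap_ne_fst {a b : V} (hab : a ≠ b) (y : V) : arcMap a b y ≠ a := by
  unfold arcMap
  split <;> [exact Ne.symm hab; assumption]

lemma not_mem_range_comp {a b : V} (hab : a ≠ b) (γ : V → V) :
    a ∉ Set.range (arcMap a b ∘ γ) := by
  rintro ⟨x, hx⟩
  exact arcMap_ne_fst hab (γ x) hx

lemma fixCnt_le (α : V → V) : fixCnt α ≤ Nat.card V := by
  have := Set.ncard_le_ncard (Set.subset_univ {x | α x = x}) (Set.toFinite _)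
  simpa [fixCnt, Set.ncard_univ] using this

lemma fixCnt_id : fixCnt (id : V → V) = Nat.card V := by
  unfold fixCnt
  simp [Set.ncard_univ]

lemma cyclCnt_id : cyclCnt (id : V → V) = 0 := by
  unfold cyclCnt
  convert Set.ncard_empty (Set V)
  ext C
  simp only [Set.mem_setOf_eq, Set.mem_empty_iff_false, iff_false]
  intro hC
  obtain ⟨x, hx⟩ : C.Nonempty := by
    rcases Set.eq_empty_or_nonempty C with rfl | h
    · have := hC.1
      simp [Set.ncard_empty] at this
    · exact h
  exact cyc_no_fix hC hx rfl

lemma cycl_step (γ : V → V) (a b : V) (hab : a ≠ b) :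
    fixCnt γ + cyclCnt (arcMap a b ∘ γ) ≤ fixCnt (arcMap a b ∘ γ) + cyclCnt γ + 1 := by
  set β := arcMap a b ∘ γ with hβ
  have hba : ∀ x, γ x ≠ a → β x = γ x := by
    intro x hx
    simp [hβ, arcMap, hx]
  have hbb : ∀ x, γ x = a → β x = b := by
    intro x hx
    simp [hβ, arcMap, hx]
  have hanotC : ∀ C : Set V, IsCyclicOrbit β C → a ∉ C := by
    intro C hC ha
    exact not_mem_range_comp hab γ (cyc_subset_range hC ha)
  have keyA : ∀ C : Set V, IsCyclicOrbit β C → b ∉ C → IsCyclicOrbit γ C := by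
    intro C hC hb
    refine cyc_transfer hC ?_ ?_
    · intro x hx
      have h1 : β x ∈ C := cyc_forward hC hx
      have hga : γ x ≠ a := fun h => hb (hbb x h ▸ h1)
      exact (hba x hga).symm
    · intro y hy
      have hga : γ y ≠ a := fun h => hanotC C hC (h ▸ hy)
      exact hC.2.2 y (hba y hga ▸ hy)
  by_cases hcase : γ a = a ∧ γ b ≠ a
  · -- fix may drop by one, but cycl does not increase
    have hcy : cyclCnt β ≤ cyclCnt γ := by
      apply Set.ncard_le_ncard _ (Set.toFinite _)
      intro C hC
      refine keyA C hC ?_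
      intro hbC
      have : β a = b := hbb a hcase.1
      exact hanotC C hC (hC.2.2 a (this ▸ hbC))
    have hfx : fixCnt γ ≤ fixCnt β + 1 := by
      have hsub : {x | γ x = x} ⊆ insert a {x | β x = x} := by
        intro x hx
        rcases eq_or_ne x a with rfl | hxa
        · exact Set.mem_insert _ _
        · refine Set.mem_insert_of_mem _ ?_
          have : γ x ≠ a := fun h => hxa ((Set.mem_setOf_eq ▸ hx).symm.trans h)
          simpa [Set.mem_setOf_eq, hba x this] using hx
      calc fixCnt γ ≤ (insert a {x | β x = x}).ncard :=
            Set.ncard_le_ncard hsub (Set.toFinite _)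
        _ ≤ fixCnt β + 1 := Set.ncard_insert_le _ _
    omega
  · -- fix does not drop, cycl increases by at most one
    have hfx : fixCnt γ ≤ fixCnt β := by
      rcases not_and_or.mp hcase with hga | hgb
      · apply Set.ncard_le_ncard _ (Set.toFinite _)
        intro x hx
        have hxa : x ≠ a := fun h => hga (h ▸ hx)
        have : γ x ≠ a := fun h => hxa ((Set.mem_setOf_eq ▸ hx).symm.trans h)
        simpa [Set.mem_setOf_eq, hba x this] using hx
      · push_neg at hgb
        have hbfix : β b = b := hbb b hgb
        have hbnot : b ∉ {x | γ x = x} \ {a} := by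
          intro h
          have : γ b = b := h.1
          exact hab (by rw [← hgb, this])
        have h1 : {x | γ x = x} ⊆ insert a (({x | γ x = x} \ {a}) ) := by
          intro x hx
          rcases eq_or_ne x a with rfl | hxa
          · exact Set.mem_insert _ _
          · exact Set.mem_insert_of_mem _ ⟨hx, hxa⟩
        have h2 : insert b ({x | γ x = x} \ {a}) ⊆ {x | β x = x} := by
          rintro x (rfl | ⟨hx, hxa⟩)
          · exact hbfix
          · have : γ x ≠ a := fun h => hxa (Set.mem_singleton_iff.mpr ((Set.mem_setOf_eq ▸ hx).symm.trans h))
            simpa [Set.mem_setOf_eq, hba x this] using hx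
        calc fixCnt γ ≤ (insert a ({x | γ x = x} \ {a})).ncard :=
              Set.ncard_le_ncard h1 (Set.toFinite _)
          _ ≤ ({x | γ x = x} \ {a}).ncard + 1 := Set.ncard_insert_le _ _
          _ = (insert b ({x | γ x = x} \ {a})).ncard := by
              rw [Set.ncard_insert_of_notMem hbnot (Set.toFinite _)]
          _ ≤ fixCnt β := Set.ncard_le_ncard h2 (Set.toFinite _)
    have hcy : cyclCnt β ≤ cyclCnt γ + 1 := by
      have hsub : {C : Set V | IsCyclicOrbit β C} ⊆
          {C : Set V | IsCyclicOrbit γ C} ∪ {C : Set V | IsCyclicOrbit β C ∧ b ∈ C} := by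
        intro C hC
        by_cases hb : b ∈ C
        · exact Or.inr ⟨hC, hb⟩
        · exact Or.inl (keyA C hC hb)
      have hT : ({C : Set V | IsCyclicOrbit β C ∧ b ∈ C}).ncard ≤ 1 := by
        rw [Set.ncard_le_one (Set.toFinite _)]
        rintro C ⟨hC, hbC⟩ C' ⟨hC', hbC'⟩
        exact cyc_unique hC hC' hbC hbC'
      calc cyclCnt β ≤ _ := Set.ncard_le_ncard hsub (Set.toFinite _)
        _ ≤ _ := Set.ncard_union_le _ _
        _ ≤ cyclCnt γ + 1 := by unfold cyclCnt; omega
    omega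

lemma lower_bound (w : List (V × V)) (hw : ∀ e ∈ w, e.1 ≠ e.2) :
    Nat.card V + cyclCnt (wordEval w) ≤ fixCnt (wordEval w) + w.length := by
  induction w using List.reverseRecOn with
  | nil => simp [wordEval_nil, fixCnt_id, cyclCnt_id]
  | append_singleton w e ih =>
    have hw' : ∀ e' ∈ w, e'.1 ≠ e'.2 := fun e' he' => hw e' (by simp [he'])
    have he : e.1 ≠ e.2 := hw e (by simp)
    have heval : wordEval (w ++ [e]) = arcMap e.1 e.2 ∘ wordEval w := by
      rw [wordEval_append]
      rfl
    have hstep := cycl_step (wordEval w) e.1 e.2 he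
    rw [heval]
    have := ih hw'
    simp only [List.length_append, List.length_singleton]
    omega

end Step

section Block
open Function Set
variable [DecidableEq V]

def chainWord : List V → V → List (V × V)
  | [], _ => []
  | [d], t => [(d, t)]
  | d :: e :: ds, t => chainWord (e :: ds) t ++ [(d, e)]

def shiftFun : List V → V → V → V
  | [], _ => fun x => x
  | d :: ds, t => fun x => if x = d then ds.headD t else shiftFun ds t x

lemma chainWord_length (L : List V) (t : V) : (chainWord L t).length = L.length := by
  induction L with
  | nil => rfl
  | cons d ds ih =>
    cases ds with
    | nil => rfl
    | cons e ds' => simp [chainWord, ih]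
  termination_by L.length

lemma chainWord_length' : ∀ (L : List V) (t : V), (chainWord L t).length = L.length
  | [], _ => rfl
  | [d], _ => rfl
  | d :: e :: ds, t => by
    simp [chainWord, chainWord_length' (e :: ds) t]

lemma chainWord_edges : ∀ (L : List V) (t : V), L.Nodup → t ∉ L →
    ∀ e ∈ chainWord L t, e.1 ≠ e.2
  | [], _, _, _ => by simp [chainWord]
  | [d], t, _, ht => by
    intro e he
    simp only [chainWord, List.mem_singleton] at he
    subst he
    have htd : t ≠ d := by simpa using ht
    exact fun h => htd h.symm
  | d :: e :: ds, t, nd, ht => by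
    intro x hx
    rw [chainWord, List.mem_append] at hx
    rcases hx with hx | hx
    · exact chainWord_edges (e :: ds) t nd.of_cons (fun h => ht (List.mem_cons_of_mem d h)) x hx
    · simp only [List.mem_singleton] at hx
      subst hx
      simp only [ne_eq]
      intro h
      exact (List.nodup_cons.mp nd).1 (h ▸ List.mem_cons_self (a := e) (l := ds))

lemma shiftFun_of_not_mem : ∀ (L : List V) (t x : V), x ∉ L → shiftFun L t x = x
  | [], _, _, _ => rfl
  | d :: ds, t, x, hx => by
    have hxd : x ≠ d := fun h => hx (h ▸ List.mem_cons_self (a := d) (l := ds))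
    simp only [shiftFun, if_neg hxd]
    exact shiftFun_of_not_mem ds t x (fun h => hx (List.mem_cons_of_mem d h))

lemma shiftFun_cases : ∀ (L : List V) (t x : V),
    shiftFun L t x = x ∨ shiftFun L t x ∈ L ∨ shiftFun L t x = t
  | [], _, _ => Or.inl rfl
  | d :: ds, t, x => by
    simp only [shiftFun]
    by_cases hxd : x = d
    · rw [if_pos hxd]
      cases ds with
      | nil => exact Or.inr (Or.inr rfl)
      | cons h ds' => exact Or.inr (Or.inl (List.mem_cons_of_mem d (List.mem_cons_self (a := h) (l := ds'))))
    · rw [if_neg hxd]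
      rcases shiftFun_cases ds t x with h | h | h
      · exact Or.inl h
      · exact Or.inr (Or.inl (List.mem_cons_of_mem d h))
      · exact Or.inr (Or.inr h)

lemma wordEval_chainWord : ∀ (L : List V) (t : V), L.Nodup → t ∉ L →
    wordEval (chainWord L t) = shiftFun L t
  | [], t, _, _ => by
    funext x
    simp [chainWord, wordEval_nil, shiftFun]
  | [d], t, _, _ => by
    funext x
    simp [chainWord, wordEval, shiftFun, arcMap]
  | d :: e :: ds, t, nd, ht => by
    have ih := wordEval_chainWord (e :: ds) t nd.of_cons
      (fun h => ht (List.mem_cons_of_mem d h))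
    have hwe : wordEval (chainWord (d :: e :: ds) t)
        = fun x => arcMap d e (wordEval (chainWord (e :: ds) t) x) := by
      rw [chainWord, wordEval_append]
      funext x
      simp [wordEval, Function.comp]
    rw [hwe, ih]
    funext x
    have hdm : d ∉ (e :: ds) := (List.nodup_cons.mp nd).1
    by_cases hxd : x = d
    · subst hxd
      rw [shiftFun_of_not_mem _ _ _ hdm]
      simp [arcMap, shiftFun]
    · have hval : shiftFun (e :: ds) t x ≠ d := by
        rcases shiftFun_cases (e :: ds) t x with h | h | h
        · rw [h]; exact hxd
        · exact fun hh => hdm (hh ▸ h)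
        · rw [h]
          exact fun hh => ht (by rw [hh]; exact List.mem_cons_self (a := d) (l := e :: ds))
      conv_rhs => rw [shiftFun]
      simp only [if_neg hxd]
      show arcMap d e (shiftFun (e :: ds) t x) = shiftFun (e :: ds) t x
      unfold arcMap
      exact if_neg hval

lemma shiftFun_spec (f : V → V) : ∀ (L : List V) (t : V),
    L.Chain' (fun a b => f a = b) → L.Nodup → t ∉ L → ∀ x,
    shiftFun L t x = if x ∈ L then (if L.getLast? = some x then t else f x) else x
  | [], t, _, _, _, x => by simp [shiftFun]
  | d :: ds, t, hch, nd, ht, x => by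
    by_cases hxd : x = d
    · subst hxd
      simp only [shiftFun, if_pos rfl, List.mem_cons, true_or, if_true]
      cases ds with
      | nil => simp
      | cons e ds' =>
        have hlast : (x :: e :: ds').getLast? = (e :: ds').getLast? := by
          rw [List.getLast?_cons_cons]
        have hxlast : (x :: e :: ds').getLast? ≠ some x := by
          rw [hlast]
          intro h
          have : x ∈ e :: ds' := by
            obtain ⟨hne, hxl⟩ := List.mem_getLast?_eq_getLast
              (show x ∈ (e :: ds').getLast? from h)
            rw [hxl]
            exact List.getLast_mem hne
          exact (List.nodup_cons.mp nd).1 this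
        rw [if_neg hxlast]
        have : f x = e := hch.rel_head
        simp [List.headD, this]
    · simp only [shiftFun, if_neg hxd]
      have ih := shiftFun_spec f ds t hch.tail nd.of_cons
        (fun h => ht (List.mem_cons_of_mem d h)) x
      rw [ih]
      have hmem : (x ∈ d :: ds) ↔ (x ∈ ds) := by
        simp [List.mem_cons, hxd]
      by_cases hxm : x ∈ ds
      · rw [if_pos hxm, if_pos (hmem.mpr hxm)]
        have hne : ds ≠ [] := List.ne_nil_of_mem hxm
        have : (d :: ds).getLast? = ds.getLast? := by
          cases ds with
          | nil => exact absurd rfl hne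
          | cons e ds' => rw [List.getLast?_cons_cons]
        rw [this]
      · rw [if_neg hxm, if_neg (fun h => hxm (hmem.mp h))]

end Block

section CycleList
open Function Set
variable [DecidableEq V]

lemma cycle_list (f : V → V) (c0 : V) (hc0 : c0 ∈ Function.periodicPts f) :
    ∃ cs : List V,
      cs.Chain' (fun a b => f a = b) ∧ cs.Nodup ∧
      (∀ y, y ∈ cs ↔ ∃ k, f^[k] c0 = y) ∧
      cs.length = Set.ncard {y | ∃ k, f^[k] c0 = y} ∧
      (∀ y, cs.getLast? = some y → f y = c0) ∧ cs ≠ [] := by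
  set q := Function.minimalPeriod f c0 with hqdef
  have hq : 0 < q := Function.minimalPeriod_pos_of_mem_periodicPts hc0
  have hiterq : f^[q] c0 = c0 := Function.iterate_minimalPeriod
  set cs : List V := (List.range q).map (fun i => f^[i] c0) with hcs
  have hmem : ∀ y, y ∈ cs ↔ ∃ k, f^[k] c0 = y := by
    intro y
    constructor
    · intro hy
      obtain ⟨i, -, rfl⟩ := List.mem_map.mp hy
      exact ⟨i, rfl⟩
    · rintro ⟨k, rfl⟩
      exact List.mem_map.mpr ⟨k % q, List.mem_range.mpr (Nat.mod_lt _ hq),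
        Function.iterate_mod_minimalPeriod_eq⟩
  have hnd : cs.Nodup := by
    refine List.Nodup.map_on ?_ ((List.nodup_range (n := q)))
    intro i hi j hj hij
    exact Function.iterate_injOn_Iio_minimalPeriod
      (Set.mem_Iio.mpr (List.mem_range.mp hi)) (Set.mem_Iio.mpr (List.mem_range.mp hj)) hij
  have hq' : q = (q - 1) + 1 := by omega
  refine ⟨cs, ?_, hnd, hmem, ?_, ?_, ?_⟩
  · rw [hcs]
    show List.IsChain _ _
    rw [List.isChain_map]
    rw [hq', List.isChain_range_succ]
    intro m hm
    exact (Function.iterate_succ_apply' f m c0).symm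
  · have hset : {y | ∃ k, f^[k] c0 = y} = (cs.toFinset : Set V) := by
      ext y
      simp only [Set.mem_setOf_eq, List.coe_toFinset, Set.mem_setOf_eq, List.mem_toFinset]
      exact (hmem y).symm
    rw [hset, Set.ncard_coe_finset, List.toFinset_card_of_nodup hnd]
  · intro y hy
    have hlast : cs.getLast? = some (f^[q-1] c0) := by
      rw [hcs]
      conv_lhs => rw [hq', List.range_succ, List.map_append]
      exact List.getLast?_concat
    rw [hlast] at hy
    have : y = f^[q-1] c0 := by injection hy.symm
    rw [this, ← Function.iterate_succ_apply' f (q-1) c0,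
      show (q-1).succ = (q-1)+1 from rfl, ← hq', hiterq]
  · intro h
    have : cs.length = q := by rw [hcs]; simp
    rw [h] at this
    simp at this
    omega

open scoped Classical in
lemma block_spec (f : V → V) (c0 z : V) (hc0 : c0 ∈ Function.periodicPts f)
    (hz : ∀ k, f^[k] c0 ≠ z) :
    ∃ w : List (V × V), (∀ e ∈ w, e.1 ≠ e.2) ∧
      w.length = Set.ncard {y | ∃ k, f^[k] c0 = y} + 1 ∧
      wordEval w = fun y => if y = z then c0 else
        if y ∈ {y | ∃ k, f^[k] c0 = y} then f y else y := by
  obtain ⟨cs, hch, hnd, hmem, hlen, hlast, hne⟩ := cycle_list f c0 hc0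
  have hzc : z ∉ cs := fun h => hz _ ((hmem z).mp h).choose_spec
  have hzcs : ∀ y ∈ cs, y ≠ z := fun y hy h => hzc (h ▸ hy)
  refine ⟨chainWord cs z ++ [(z, c0)], ?_, ?_, ?_⟩
  · intro e he
    rw [List.mem_append] at he
    rcases he with he | he
    · exact chainWord_edges cs z hnd hzc e he
    · simp only [List.mem_singleton] at he
      subst he
      exact Ne.symm (hz 0)
  · simp only [List.length_append, List.length_singleton, chainWord_length, hlen]
  · rw [wordEval_append, wordEval_chainWord cs z hnd hzc]
    funext y
    have hbase : wordEval [(z, c0)] = arcMap z c0 := rfl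
    rw [hbase]
    simp only [Function.comp_apply]
    rw [shiftFun_spec f cs z hch hnd hzc y]
    by_cases hyz : y = z
    · subst hyz
      rw [if_neg hzc, if_pos rfl]
      simp [arcMap]
    · rw [if_neg hyz]
      by_cases hyc : y ∈ cs
      · rw [if_pos hyc]
        by_cases hylast : cs.getLast? = some y
        · rw [if_pos hylast, if_pos (show y ∈ {v | ∃ k, f^[k] c0 = v} from (hmem y).mp hyc)]
          simpa [arcMap] using (hlast y hylast).symm
        · rw [if_neg hylast, if_pos (show y ∈ {v | ∃ k, f^[k] c0 = v} from (hmem y).mp hyc)]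
          have hfy : f y ∈ cs := by
            obtain ⟨k, rfl⟩ := (hmem y).mp hyc
            exact (hmem _).mpr ⟨k+1, Function.iterate_succ_apply' f k c0⟩
          have : f y ≠ z := hzcs _ hfy
          simp [arcMap, this]
      · rw [if_neg hyc,
          if_neg (show y ∉ {v | ∃ k, f^[k] c0 = v} from fun h => hyc ((hmem y).mpr h))]
        simp [arcMap, hyz]

end CycleList

section Main
set_option linter.unusedSectionVars false
open Function Set
variable [DecidableEq V] [Finite V]

lemma eq_id_of_fixCnt_eq (τ : V → V) (h : fixCnt τ = Nat.card V) : τ = id := by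
  have hsub : {x | τ x = x} = Set.univ :=
    Set.eq_of_subset_of_ncard_le (Set.subset_univ _) (by rw [Set.ncard_univ, ← h]; rfl)
      (Set.toFinite _)
  funext x
  exact (show x ∈ {x | τ x = x} from hsub ▸ Set.mem_univ x)

lemma exists_nonrange (τ : V → V) (h : ¬ Function.Bijective τ) : ∃ z, z ∉ Set.range τ := by
  by_contra h'
  push_neg at h'
  exact h (Finite.surjective_iff_bijective.mp (fun y => h' y))

lemma cyclCnt_pos_of_orbit {τ : V → V} {C : Set V} (hC : IsCyclicOrbit τ C) :
    cyclCnt τ ≠ 0 := by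
  have : 0 < ({C' : Set V | IsCyclicOrbit τ C'}).ncard :=
    (Set.ncard_pos (Set.toFinite _)).mpr ⟨C, hC⟩
  unfold cyclCnt
  omega

lemma id_of_bij_cycl_zero (τ : V → V) (hb : Function.Bijective τ) (hc : cyclCnt τ = 0) :
    τ = id := by
  by_contra hne
  obtain ⟨x, hx⟩ : ∃ x, τ x ≠ x := by
    by_contra h
    push_neg at h
    exact hne (funext h)
  obtain ⟨i, j, hij, he⟩ := Finite.exists_ne_map_eq_of_infinite (fun i : ℕ => τ^[i] x)
  wlog hlt : i < j generalizing i j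
  · exact this j i hij.symm he.symm (by omega)
  have hcan : τ^[j - i] x = x := by
    apply (hb.injective.iterate i)
    rw [← Function.iterate_add_apply]
    have : i + (j - i) = j := by omega
    rw [this]
    exact he.symm
  set p := j - i with hpdef
  have hp : 0 < p := by omega
  set C := {y | ∃ k, τ^[k] x = y} with hCdef
  have hCo : IsCyclicOrbit τ C := by
    refine ⟨?_, ⟨x, ⟨0, rfl⟩, ⟨p, hp, hcan⟩, rfl⟩, ?_⟩
    · have : 1 < C.ncard := (Set.one_lt_ncard (Set.toFinite _)).mpr
        ⟨x, ⟨0, rfl⟩, τ x, ⟨1, by simp⟩, Ne.symm hx⟩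
      omega
    · intro y hy
      obtain ⟨k, hk⟩ := hy
      cases k with
      | zero =>
        refine ⟨p - 1, hb.injective ?_⟩
        have h1 : p - 1 + 1 = p := by omega
        rw [← Function.iterate_succ_apply' τ (p-1) x,
          show (p-1).succ = (p-1)+1 from rfl, h1, hcan]
        simpa using hk
      | succ k =>
        refine ⟨k, hb.injective ?_⟩
        rw [Function.iterate_succ_apply'] at hk
        exact hk
  exact cyclCnt_pos_of_orbit hCo hc

lemma lemA (m : ℕ) : ∀ τ : V → V, cyclCnt τ = 0 → Nat.card V - fixCnt τ ≤ m →
    ∃ w : List (V × V), (∀ e ∈ w, e.1 ≠ e.2) ∧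
      w.length = Nat.card V - fixCnt τ ∧ wordEval w = τ := by
  induction m with
  | zero =>
    intro τ hc hm
    have hfix : fixCnt τ = Nat.card V := by
      have := fixCnt_le τ
      omega
    refine ⟨[], by simp, by simp [hfix], (eq_id_of_fixCnt_eq τ hfix).symm⟩
  | succ m ih =>
    intro τ hc hm
    classical
    by_cases hid : τ = id
    · subst hid
      exact ⟨[], by simp, by simp [fixCnt_id], rfl⟩
    have hfixlt : fixCnt τ < Nat.card V := by
      have h1 := fixCnt_le τ
      have h2 : fixCnt τ ≠ Nat.card V := fun h => hid (eq_id_of_fixCnt_eq τ h)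
      omega
    have hbij : ¬ Function.Bijective τ := fun hb => hid (id_of_bij_cycl_zero τ hb hc)
    obtain ⟨z, hz⟩ := exists_nonrange τ hbij
    have hτz : τ z ≠ z := fun h => hz ⟨z, h⟩
    have hτnez : ∀ x, τ x ≠ z := fun x h => hz ⟨x, h⟩
    set γ := Function.update τ z z with hγdef
    have hγz : γ z = z := Function.update_self z z τ
    have hγx : ∀ x, x ≠ z → γ x = τ x := fun x hx => Function.update_of_ne hx z τ
    have hfixset : {x | γ x = x} = insert z {x | τ x = x} := by
      ext x
      by_cases hxz : x = z
      · subst hxz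
        simp [hγz]
      · simp [hγx x hxz, hxz]
    have hfixγ : fixCnt γ = fixCnt τ + 1 := by
      unfold fixCnt
      rw [hfixset, Set.ncard_insert_of_notMem (show z ∉ {x | τ x = x} from hτz) (Set.toFinite _)]
    by_cases hcγ : cyclCnt γ = 0
    · obtain ⟨w, he, hl, hev⟩ := ih γ hcγ (by omega)
      refine ⟨w ++ [(z, τ z)], ?_, ?_, ?_⟩
      · intro e he'
        rw [List.mem_append] at he'
        rcases he' with h | h
        · exact he e h
        · simp only [List.mem_singleton] at h
          subst h
          exact Ne.symm hτz
      · simp only [List.length_append, List.length_singleton, hl, hfixγ]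
        omega
      · rw [wordEval_append, hev]
        funext x
        show arcMap z (τ z) (γ x) = τ x
        by_cases hxz : x = z
        · subst hxz
          rw [hγz]
          simp [arcMap]
        · rw [hγx x hxz]
          simp [arcMap, hτnez x]
    · obtain ⟨C, hC⟩ : ∃ C, IsCyclicOrbit γ C := by
        by_contra h
        push_neg at h
        apply hcγ
        unfold cyclCnt
        convert Set.ncard_empty (Set V)
        ext C
        simpa using h C
      have hzC : z ∉ C := fun h => cyc_no_fix hC h hγz
      have hγτC : ∀ x ∈ C, τ x = γ x := fun x hx =>
        (hγx x (fun hh => hzC (hh ▸ hx))).symm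
      have hτzC : τ z ∈ C := by
        by_contra hns
        refine cyclCnt_pos_of_orbit (C := C) ?_ hc
        refine cyc_transfer hC hγτC ?_
        intro y hy
        by_cases hyz : y = z
        · exact absurd (hyz ▸ hy) hns
        · exact hC.2.2 y (hγx y hyz ▸ hy)
      obtain ⟨⟨p, hp, hper⟩, horb⟩ := cyc_mem_orbit hC hτzC
      have hc0per : τ z ∈ Function.periodicPts γ := Function.mk_mem_periodicPts hp hper
      have hzorb : ∀ k, γ^[k] (τ z) ≠ z := by
        intro k h
        exact hzC (by rw [horb]; exact ⟨k, h⟩)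
      obtain ⟨wb, hbe, hbl, hbev⟩ := block_spec γ (τ z) z hc0per hzorb
      have horbset : {y | ∃ k, γ^[k] (τ z) = y} = C := horb.symm
      set γ' := fun y => if y ∈ C ∨ y = z then y else τ y with hγ'def
      have hγ'C : ∀ y, (y ∈ C ∨ y = z) → γ' y = y := by
        intro y hy
        simp only [hγ'def, if_pos hy]
      have hγ'o : ∀ y, ¬(y ∈ C ∨ y = z) → γ' y = τ y := by
        intro y hy
        simp only [hγ'def, if_neg hy]
      have hCnofix : ∀ x ∈ C, τ x ≠ x := by
        intro x hx h
        exact cyc_no_fix hC hx ((hγτC x hx).symm.trans h)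
      -- cyclCnt γ' = 0
      have hcycγ' : cyclCnt γ' = 0 := by
        by_contra h
        obtain ⟨C'', hC''⟩ : ∃ C'', IsCyclicOrbit γ' C'' := by
          by_contra h'
          push_neg at h'
          apply h
          unfold cyclCnt
          convert Set.ncard_empty (Set V)
          ext D
          simpa using h' D
        have hdisj : ∀ x ∈ C'', ¬(x ∈ C ∨ x = z) := by
          intro x hx hor
          exact cyc_no_fix hC'' hx (hγ'C x hor)
        refine cyclCnt_pos_of_orbit (C := C'') ?_ hc
        refine cyc_transfer hC'' (fun x hx => (hγ'o x (hdisj x hx)).symm) ?_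
        intro y hy
        by_cases hyor : y ∈ C ∨ y = z
        · exfalso
          have hτy : τ y ∈ C := by
            rcases hyor with hyC | rfl
            · exact (hγτC y hyC) ▸ cyc_forward hC hyC
            · exact hτzC
          exact hdisj _ hy (Or.inl hτy)
        · exact hC''.2.2 y (hγ'o y hyor ▸ hy)
      -- fixCnt γ'
      have hfixset' : {x | γ' x = x} = insert z ({x | τ x = x} ∪ C) := by
        ext x
        constructor
        · intro hx
          by_cases hor : x ∈ C ∨ x = z
          · rcases hor with h | h
            · exact Set.mem_insert_of_mem _ (Or.inr h)
            · exact h ▸ Set.mem_insert _ _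
          · rw [Set.mem_insert_iff]
            exact Or.inr (Or.inl (show τ x = x from by rw [← hγ'o x hor]; exact hx))
        · intro hx
          rcases hx with rfl | hx
          · exact hγ'C x (Or.inr rfl)
          · rcases hx with hfix | hC'
            · by_cases hor : x ∈ C ∨ x = z
              · exact hγ'C x hor
              · show γ' x = x
                rw [hγ'o x hor]
                exact hfix
            · exact hγ'C x (Or.inl hC')
      have hdisj2 : Disjoint {x | τ x = x} C := by
        rw [Set.disjoint_left]
        intro x hx hxC
        exact hCnofix x hxC hx
      have hfixγ' : fixCnt γ' = fixCnt τ + C.ncard + 1 := by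
        unfold fixCnt
        rw [hfixset', Set.ncard_insert_of_notMem ?_ (Set.toFinite _),
          Set.ncard_union_eq hdisj2 (Set.toFinite _) (Set.toFinite _)]
        rintro (h | h)
        · exact hτz h
        · exact hzC h
      have h2C : 2 ≤ C.ncard := hC.1
      have hfl : fixCnt γ' ≤ Nat.card V := fixCnt_le γ'
      obtain ⟨w', he', hl', hev'⟩ := ih γ' hcycγ' (by omega)
      refine ⟨w' ++ wb, ?_, ?_, ?_⟩
      · intro e he''
        rw [List.mem_append] at he''
        rcases he'' with h | h
        · exact he' e h
        · exact hbe e h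
      · rw [List.length_append, hl', hbl, horbset, hfixγ']
        omega
      · rw [wordEval_append, hev', hbev]
        funext y
        simp only [Function.comp_apply]
        by_cases hyz : y = z
        · subst hyz
          rw [hγ'C y (Or.inr rfl), if_pos rfl]
        · by_cases hyC : y ∈ C
          · rw [hγ'C y (Or.inl hyC), if_neg hyz,
              if_pos (show y ∈ {v | ∃ k, γ^[k] (τ z) = v} from horb ▸ hyC)]
            exact (hγτC y hyC).symm
          · rw [hγ'o y (fun h => h.elim hyC hyz)]
            have h1 : τ y ≠ z := hτnez y
            have h2 : τ y ∉ C := by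
              intro h
              exact hyC (hC.2.2 y ((hγx y hyz) ▸ h))
            rw [if_neg h1, if_neg (show τ y ∉ {v | ∃ k, γ^[k] (τ z) = v} from horb ▸ h2)]
  


lemma lemB (m : ℕ) : ∀ α : V → V, ¬ Function.Bijective α → cyclCnt α ≤ m →
    ∃ w : List (V × V), (∀ e ∈ w, e.1 ≠ e.2) ∧
      w.length = (Nat.card V - fixCnt α) + cyclCnt α ∧ wordEval w = α := by
  induction m with
  | zero =>
    intro α hbij hm
    have h0 : cyclCnt α = 0 := by omega
    obtain ⟨w, he, hl, hev⟩ := lemA (Nat.card V - fixCnt α) α h0 le_rfl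
    exact ⟨w, he, by rw [hl, h0]; omega, hev⟩
  | succ m ih =>
    intro α hbij hm
    classical
    by_cases h0 : cyclCnt α = 0
    · obtain ⟨w, he, hl, hev⟩ := lemA (Nat.card V - fixCnt α) α h0 le_rfl
      exact ⟨w, he, by rw [hl, h0]; omega, hev⟩
    obtain ⟨C, hC⟩ : ∃ C, IsCyclicOrbit α C := by
      by_contra h
      push_neg at h
      apply h0
      unfold cyclCnt
      convert Set.ncard_empty (Set V)
      ext D
      simpa using h D
    obtain ⟨z, hz⟩ := exists_nonrange α hbij
    have hzC : z ∉ C := fun h => hz (cyc_subset_range hC h)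
    have hαnez : ∀ x, α x ≠ z := fun x h => hz ⟨x, h⟩
    obtain ⟨h2C, ⟨x₀, hx₀, ⟨k, hk, hper⟩, horb⟩, hpre⟩ := hC
    have hCo : IsCyclicOrbit α C := ⟨h2C, ⟨x₀, hx₀, ⟨k, hk, hper⟩, horb⟩, hpre⟩
    have hx₀per : x₀ ∈ Function.periodicPts α := Function.mk_mem_periodicPts hk hper
    have hzorb : ∀ j, α^[j] x₀ ≠ z := by
      intro j h
      exact hzC (by rw [horb]; exact ⟨j, h⟩)
    obtain ⟨wb, hbe, hbl, hbev⟩ := block_spec α x₀ z hx₀per hzorb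
    have horbset : {y | ∃ j, α^[j] x₀ = y} = C := horb.symm
    set γ := fun y => if y ∈ C then y else α y with hγdef
    have hγC : ∀ y ∈ C, γ y = y := fun y hy => by simp only [hγdef, if_pos hy]
    have hγo : ∀ y, y ∉ C → γ y = α y := fun y hy => by simp only [hγdef, if_neg hy]
    have hCnofix : ∀ x ∈ C, α x ≠ x := fun x hx => cyc_no_fix hCo hx
    -- fixCnt γ
    have hfixset : {x | γ x = x} = {x | α x = x} ∪ C := by
      ext x
      constructor
      · intro hx
        by_cases hxC : x ∈ C
        · exact Or.inr hxC
        · exact Or.inl (show α x = x from by rw [← hγo x hxC]; exact hx)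
      · rintro (hx | hx)
        · by_cases hxC : x ∈ C
          · exact hγC x hxC
          · show γ x = x
            rw [hγo x hxC]
            exact hx
        · exact hγC x hx
    have hdisj : Disjoint {x | α x = x} C := by
      rw [Set.disjoint_left]
      intro x hx hxC
      exact hCnofix x hxC hx
    have hfixγ : fixCnt γ = fixCnt α + C.ncard := by
      unfold fixCnt
      rw [hfixset, Set.ncard_union_eq hdisj (Set.toFinite _) (Set.toFinite _)]
    -- cycl sets
    have hset : {D : Set V | IsCyclicOrbit γ D} = {D : Set V | IsCyclicOrbit α D} \ {C} := by
      ext D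
      constructor
      · intro hD
        have hdisjD : ∀ x ∈ D, x ∉ C := fun x hx hxC =>
          cyc_no_fix hD hx (hγC x hxC)
        have hDα : IsCyclicOrbit α D := by
          refine cyc_transfer hD (fun x hx => (hγo x (hdisjD x hx)).symm) ?_
          intro y hy
          by_cases hyC : y ∈ C
          · exact absurd (cyc_forward hCo hyC) (hdisjD _ hy)
          · exact hD.2.2 y (hγo y hyC ▸ hy)
        refine ⟨hDα, ?_⟩
        intro hDC
        rw [Set.mem_singleton_iff] at hDC
        exact hdisjD x₀ (hDC ▸ hx₀) hx₀
      · rintro ⟨hD, hDC⟩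
        rw [Set.mem_singleton_iff] at hDC
        have hdisjD : ∀ x ∈ D, x ∉ C := fun x hx hxC =>
          hDC (cyc_unique hD hCo hx hxC)
        refine cyc_transfer hD (fun x hx => hγo x (hdisjD x hx)) ?_
        intro y hy
        by_cases hyC : y ∈ C
        · exact absurd hyC (hdisjD y (hγC y hyC ▸ hy))
        · exact hD.2.2 y (hγo y hyC ▸ hy)
    have hcycγ : cyclCnt γ = cyclCnt α - 1 := by
      unfold cyclCnt
      rw [hset, Set.ncard_diff_singleton_of_mem (show C ∈ {D : Set V | IsCyclicOrbit α D}
        from hCo)]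
    -- γ non-bijective
    have hznr : z ∉ Set.range γ := by
      rintro ⟨y, hy⟩
      by_cases hyC : y ∈ C
      · rw [hγC y hyC] at hy
        exact hzC (hy ▸ hyC)
      · rw [hγo y hyC] at hy
        exact hαnez y hy
    have hγbij : ¬ Function.Bijective γ := fun hb => hznr (hb.surjective z)
    have h1 : 1 ≤ cyclCnt α := by omega
    obtain ⟨w', he', hl', hev'⟩ := ih γ hγbij (by omega)
    have hfl : fixCnt γ ≤ Nat.card V := fixCnt_le γ
    refine ⟨w' ++ wb, ?_, ?_, ?_⟩
    · intro e he''
      rw [List.mem_append] at he''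
      rcases he'' with h | h
      · exact he' e h
      · exact hbe e h
    · rw [List.length_append, hl', hbl, horbset, hfixγ, hcycγ]
      omega
    · rw [wordEval_append, hev', hbev]
      funext y
      simp only [Function.comp_apply]
      by_cases hyC : y ∈ C
      · have hyz : y ≠ z := fun h => hzC (h ▸ hyC)
        rw [hγC y hyC, if_neg hyz,
          if_pos (show y ∈ {v | ∃ j, α^[j] x₀ = v} from horb ▸ hyC)]
      · rw [hγo y hyC]
        have h1' : α y ≠ z := hαnez y
        have h2' : α y ∉ C := fun h => hyC (hpre y h)
        rw [if_neg h1', if_neg (show α y ∉ {v | ∃ j, α^[j] x₀ = v} from horb ▸ h2')]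

end Main


/-- Howie–Iwahori: for `n ≥ 2` and any non-bijective `α` on `{1,…,n}`,
`ℓ(K_n, α) = n + cycl(α) − fix(α)`. -/
theorem stmt0 (n : ℕ) (hn : 2 ≤ n) (α : Fin n → Fin n) (hα : ¬ Function.Bijective α) :
    arcLen (fun a b : Fin n => a ≠ b) α = n + cyclCnt α - fixCnt α := by
  classical
  have hcard : Nat.card (Fin n) = n := by simp
  obtain ⟨w₀, he₀, hl₀, hev₀⟩ := lemB (cyclCnt α) α hα le_rfl
  have hfix : fixCnt α ≤ n := by
    have := fixCnt_le α
    omega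
  have hmem : (n + cyclCnt α - fixCnt α) ∈
      {k | ∃ w : List (Fin n × Fin n), w.length = k ∧
        (∀ e ∈ w, (fun a b : Fin n => a ≠ b) e.1 e.2) ∧ wordEval w = α} := by
    refine ⟨w₀, ?_, he₀, hev₀⟩
    rw [hl₀, hcard]
    omega
  unfold arcLen
  apply le_antisymm
  · exact Nat.sInf_le hmem
  · apply le_csInf ⟨_, hmem⟩
    rintro k ⟨w, hwl, hwe, hwev⟩
    have hlb := lower_bound w hwe
    rw [hwev, hwl, hcard] at hlb
    omega
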